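/- Let G = A₄ be the alternating group on {1,2,3,4}, and let H_K = ⟨(1 2 3)⟩ (cyclic of order 3), H_{K₃} = {id, (1 2)(3 4), (1 3)(2 4), (1 4)(2 3)} (the Klein four subgroup), and H_F = {id, (1 2)(3 4)}. Then for every finite-dimensional complex representation V of G, dim_ℂ V^{H_K} + dim_ℂ V^{H_{K₃}} = dim_ℂ V^{H_F} + dim_ℂ V^{G}, where V^{H} denotes the subspace of vectors fixed by all elements of the subgroup H. -/

import Mathlib

/-- `A₄`, the alternating group on `{1,2,3,4}`. -/
abbrev A4 : Type := ↥(alternatingGroup (Fin 4))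

/-- The subgroup `⟨(1 2 3)⟩` of `A₄`: the stabilizer of `4`, cyclic of order 3. -/
def HKA : Subgroup A4 :=
  Subgroup.comap (alternatingGroup (Fin 4)).subtype
    (Subgroup.zpowers (Equiv.swap 0 1 * Equiv.swap 1 2))

/-- The Klein four subgroup `{id, (1 2)(3 4), (1 3)(2 4), (1 4)(2 3)}` of `A₄`. -/
def HK3A : Subgroup A4 :=
  Subgroup.comap (alternatingGroup (Fin 4)).subtype
    { carrier := {σ | σ = 1 ∨ σ = Equiv.swap 0 1 * Equiv.swap 2 3 ∨
        σ = Equiv.swap 0 2 * Equiv.swap 1 3 ∨ σ = Equiv.swap 0 3 * Equiv.swap 1 2}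
      one_mem' := by decide
      mul_mem' := by decide
      inv_mem' := by decide }

/-- The subgroup `{id, (1 2)(3 4)}` of `A₄`. -/
def HFA : Subgroup A4 :=
  Subgroup.comap (alternatingGroup (Fin 4)).subtype
    (Subgroup.zpowers (Equiv.swap 0 1 * Equiv.swap 2 3))

open Equiv LinearMap Module Representation

section Aux

/-- trace/card identity -/
lemma A4aux_card_mul_finrank {G : Type} [Group G] [Fintype G]
    (V : Type) [AddCommGroup V] [Module ℂ V] [FiniteDimensional ℂ V]
    (ρ : Representation ℂ G V) :
    (Fintype.card G : ℂ) * (Module.finrank ℂ (Representation.invariants ρ) : ℂ)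
      = ∑ g : G, LinearMap.trace ℂ V (ρ g) := by
  have h : ⅟(Fintype.card G : ℂ) • ∑ g : G, LinearMap.trace ℂ V (ρ g)
      = (finrank ℂ (Representation.invariants ρ) : ℂ) := by
    have h0 := FDRep.average_char_eq_finrank_invariants (FDRep.of ρ)
    rw [Nat.card_eq_fintype_card] at h0
    rw [invOf_eq_inv, smul_eq_mul]
    exact h0
  rw [← h, smul_eq_mul, ← mul_assoc, mul_invOf_self, one_mul]

def aP : Perm (Fin 4) := Equiv.swap 0 1 * Equiv.swap 2 3
def bP : Perm (Fin 4) := Equiv.swap 0 2 * Equiv.swap 1 3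
def dP : Perm (Fin 4) := Equiv.swap 0 3 * Equiv.swap 1 2
def cP : Perm (Fin 4) := Equiv.swap 0 1 * Equiv.swap 1 2
def cP2 : Perm (Fin 4) := Equiv.swap 0 2 * Equiv.swap 2 1
def t1P : Perm (Fin 4) := Equiv.swap 0 1 * Equiv.swap 1 3
def t1P' : Perm (Fin 4) := Equiv.swap 0 3 * Equiv.swap 3 1
def t2P : Perm (Fin 4) := Equiv.swap 0 2 * Equiv.swap 2 3
def t2P' : Perm (Fin 4) := Equiv.swap 0 3 * Equiv.swap 3 2
def t3P : Perm (Fin 4) := Equiv.swap 1 2 * Equiv.swap 2 3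
def t3P' : Perm (Fin 4) := Equiv.swap 1 3 * Equiv.swap 3 2

def ga : A4 := ⟨aP, Perm.mem_alternatingGroup.mpr (by decide)⟩
def gb : A4 := ⟨bP, Perm.mem_alternatingGroup.mpr (by decide)⟩
def gd : A4 := ⟨dP, Perm.mem_alternatingGroup.mpr (by decide)⟩
def gc : A4 := ⟨cP, Perm.mem_alternatingGroup.mpr (by decide)⟩
def gc2 : A4 := ⟨cP2, Perm.mem_alternatingGroup.mpr (by decide)⟩
def gt1 : A4 := ⟨t1P, Perm.mem_alternatingGroup.mpr (by decide)⟩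
def gt1' : A4 := ⟨t1P', Perm.mem_alternatingGroup.mpr (by decide)⟩
def gt2 : A4 := ⟨t2P, Perm.mem_alternatingGroup.mpr (by decide)⟩
def gt2' : A4 := ⟨t2P', Perm.mem_alternatingGroup.mpr (by decide)⟩
def gt3 : A4 := ⟨t3P, Perm.mem_alternatingGroup.mpr (by decide)⟩
def gt3' : A4 := ⟨t3P', Perm.mem_alternatingGroup.mpr (by decide)⟩

def SKsub : Subgroup (Perm (Fin 4)) :=
  { carrier := {σ | σ = 1 ∨ σ = cP ∨ σ = cP2}
    one_mem' := by decide
    mul_mem' := by decide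
    inv_mem' := by decide }

def SFsub : Subgroup (Perm (Fin 4)) :=
  { carrier := {σ | σ = 1 ∨ σ = aP}
    one_mem' := by decide
    mul_mem' := by decide
    inv_mem' := by decide }

lemma zpowers_cP : Subgroup.zpowers cP = SKsub := by
  apply le_antisymm
  · exact Subgroup.zpowers_le.mpr (Or.inr (Or.inl rfl))
  · rintro x (rfl | rfl | rfl)
    · exact Subgroup.one_mem _
    · exact Subgroup.mem_zpowers _
    · have : cP2 = cP * cP := by decide
      rw [this]; exact Subgroup.mul_mem _ (Subgroup.mem_zpowers _) (Subgroup.mem_zpowers _)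

lemma zpowers_aP : Subgroup.zpowers aP = SFsub := by
  apply le_antisymm
  · exact Subgroup.zpowers_le.mpr (Or.inr rfl)
  · rintro x (rfl | rfl)
    · exact Subgroup.one_mem _
    · exact Subgroup.mem_zpowers _

lemma memHKA (x : A4) : x ∈ HKA ↔ x ∈ ({1, gc, gc2} : Finset A4) := by
  show (x : Perm (Fin 4)) ∈ Subgroup.zpowers cP ↔ _
  rw [zpowers_cP]
  show ((x : Perm (Fin 4)) = 1 ∨ _ ∨ _) ↔ _
  simp only [Finset.mem_insert, Finset.mem_singleton]
  rw [Subtype.ext_iff, Subtype.ext_iff, Subtype.ext_iff]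
  exact Iff.rfl

lemma memHFA (x : A4) : x ∈ HFA ↔ x ∈ ({1, ga} : Finset A4) := by
  show (x : Perm (Fin 4)) ∈ Subgroup.zpowers aP ↔ _
  rw [zpowers_aP]
  show ((x : Perm (Fin 4)) = 1 ∨ _) ↔ _
  simp only [Finset.mem_insert, Finset.mem_singleton]
  rw [Subtype.ext_iff, Subtype.ext_iff]
  exact Iff.rfl

lemma memHK3A (x : A4) : x ∈ HK3A ↔ x ∈ ({1, ga, gb, gd} : Finset A4) := by
  show ((x : Perm (Fin 4)) = 1 ∨ _ ∨ _ ∨ _) ↔ _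
  simp only [Finset.mem_insert, Finset.mem_singleton]
  rw [Subtype.ext_iff, Subtype.ext_iff, Subtype.ext_iff, Subtype.ext_iff]
  exact Iff.rfl

lemma univA4 : (Finset.univ : Finset A4) =
    {1, ga, gb, gd, gc, gc2, gt1, gt1', gt2, gt2', gt3, gt3'} := by
  decide

end Aux

theorem fixed_space_dim_identity_A4
    (V : Type) [AddCommGroup V] [Module ℂ V] [FiniteDimensional ℂ V]
    (ρ : Representation ℂ A4 V) :
    Module.finrank ℂ (Representation.invariants (ρ.comp HKA.subtype))
        + Module.finrank ℂ (Representation.invariants (ρ.comp HK3A.subtype))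
      = Module.finrank ℂ (Representation.invariants (ρ.comp HFA.subtype))
        + Module.finrank ℂ (Representation.invariants ρ) := by
  classical
  have hconj : ∀ t g : A4, LinearMap.trace ℂ V (ρ (t * g * t⁻¹)) = LinearMap.trace ℂ V (ρ g) := by
    intro t g
    rw [map_mul ρ (t * g) t⁻¹, LinearMap.trace_mul_comm, map_mul ρ t g, ← mul_assoc,
      ← map_mul ρ t⁻¹ t, inv_mul_cancel, map_one, one_mul]
  have key : ∀ (H : Subgroup A4) (s : Finset A4), (∀ x, x ∈ H ↔ x ∈ s) →
      (s.card : ℂ) * (Module.finrank ℂ (Representation.invariants (ρ.comp H.subtype)) : ℂ)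
        = ∑ g ∈ s, LinearMap.trace ℂ V (ρ g) := by
    intro H s hs
    have h1 := A4aux_card_mul_finrank V (ρ.comp H.subtype)
    rw [Fintype.card_of_subtype s (fun x => (hs x).symm)] at h1
    rw [h1]
    rw [Finset.sum_subtype s (fun x => (hs x).symm) (fun g => LinearMap.trace ℂ V (ρ g))]
    exact Finset.sum_congr rfl fun x _ => rfl
  have hK := key HKA {1, gc, gc2} memHKA
  have hK3 := key HK3A {1, ga, gb, gd} memHK3A
  have hF := key HFA {1, ga} memHFA
  have hG := A4aux_card_mul_finrank V ρ
  rw [show ({1, gc, gc2} : Finset A4).card = 3 from by decide,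
    Finset.sum_insert (by decide), Finset.sum_insert (by decide), Finset.sum_singleton] at hK
  rw [show ({1, ga, gb, gd} : Finset A4).card = 4 from by decide,
    Finset.sum_insert (by decide), Finset.sum_insert (by decide), Finset.sum_insert (by decide),
    Finset.sum_singleton] at hK3
  rw [show ({1, ga} : Finset A4).card = 2 from by decide,
    Finset.sum_insert (by decide), Finset.sum_singleton] at hF
  rw [show Fintype.card A4 = 12 from by decide] at hG
  rw [show (Finset.univ : Finset A4) =
      {1, ga, gb, gd, gc, gc2, gt1, gt1', gt2, gt2', gt3, gt3'} from univA4,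
    Finset.sum_insert (by decide), Finset.sum_insert (by decide), Finset.sum_insert (by decide),
    Finset.sum_insert (by decide), Finset.sum_insert (by decide), Finset.sum_insert (by decide),
    Finset.sum_insert (by decide), Finset.sum_insert (by decide), Finset.sum_insert (by decide),
    Finset.sum_insert (by decide), Finset.sum_insert (by decide), Finset.sum_singleton] at hG
  have hd : LinearMap.trace ℂ V (ρ gd) = LinearMap.trace ℂ V (ρ ga) := by
    rw [show gd = gc * ga * gc⁻¹ from Subtype.ext (by decide)]; exact hconj _ _
  have hb2 : LinearMap.trace ℂ V (ρ gb) = LinearMap.trace ℂ V (ρ ga) := by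
    rw [show gb = gc * gd * gc⁻¹ from Subtype.ext (by decide)]; rw [hconj]; exact hd
  have ht1' : LinearMap.trace ℂ V (ρ gt1') = LinearMap.trace ℂ V (ρ gc) := by
    rw [show gt1' = ga * gc * ga⁻¹ from Subtype.ext (by decide)]; exact hconj _ _
  have ht2 : LinearMap.trace ℂ V (ρ gt2) = LinearMap.trace ℂ V (ρ gc) := by
    rw [show gt2 = gb * gc * gb⁻¹ from Subtype.ext (by decide)]; exact hconj _ _
  have ht3' : LinearMap.trace ℂ V (ρ gt3') = LinearMap.trace ℂ V (ρ gc) := by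
    rw [show gt3' = gd * gc * gd⁻¹ from Subtype.ext (by decide)]; exact hconj _ _
  have ht1 : LinearMap.trace ℂ V (ρ gt1) = LinearMap.trace ℂ V (ρ gc2) := by
    rw [show gt1 = ga * gc2 * ga⁻¹ from Subtype.ext (by decide)]; exact hconj _ _
  have ht2' : LinearMap.trace ℂ V (ρ gt2') = LinearMap.trace ℂ V (ρ gc2) := by
    rw [show gt2' = gb * gc2 * gb⁻¹ from Subtype.ext (by decide)]; exact hconj _ _
  have ht3 : LinearMap.trace ℂ V (ρ gt3) = LinearMap.trace ℂ V (ρ gc2) := by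
    rw [show gt3 = gd * gc2 * gd⁻¹ from Subtype.ext (by decide)]; exact hconj _ _
  have final : (Module.finrank ℂ (Representation.invariants (ρ.comp HKA.subtype)) : ℂ)
        + (Module.finrank ℂ (Representation.invariants (ρ.comp HK3A.subtype)) : ℂ)
      = (Module.finrank ℂ (Representation.invariants (ρ.comp HFA.subtype)) : ℂ)
        + (Module.finrank ℂ (Representation.invariants ρ) : ℂ) := by
    push_cast at hK hK3 hF hG
    linear_combination (1/3) * hK + (1/4) * hK3 - (1/2) * hF - (1/12) * hG
      + (1/6) * hb2 + (1/6) * hd - (1/12) * (ht1' + ht2 + ht3')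
      - (1/12) * (ht1 + ht2' + ht3)
  exact_mod_cast final
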